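/- Let t = (α−β)/(log α − log β) for α > β > 0, and let μ be a probability measure on [0,∞) with ∫ 1/u² dμ(u) > (log α − log β)/(α−β). Suppose for each ε > 0, σ(ε) ∈ (0, log(α/β)) solves (1/σ)·∫ [u² + ε²(α−β)² e^σ/(α−βe^σ)²]⁻¹ dμ(u) = 1/(α−β), and set ε₀(ε) = ε(α−β)e^{σ(ε)/2}/(α − β e^{σ(ε)}). Then σ(ε) → log(α/β) as ε → 0⁺, and ε₀(ε) converges to the unique s > 0 satisfying ∫ (u² + s²)⁻¹ dμ(u) = (log α − log β)/(α−β). -/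

import Mathlib

open MeasureTheory Filter Topology

section Aux

variable (μ : Measure ℝ) [IsProbabilityMeasure μ]

lemma aux_int (t : ℝ) (ht : 0 < t) :
    Integrable (fun u : ℝ => (u ^ 2 + t ^ 2)⁻¹) μ := by
  have hcont : Continuous fun u : ℝ => (u ^ 2 + t ^ 2)⁻¹ :=
    ((continuous_pow 2).add continuous_const).inv₀ (fun u => (add_pos_of_nonneg_of_pos (sq_nonneg u) (pow_pos ht 2)).ne')
  refine (integrable_const ((t ^ 2)⁻¹)).mono' hcont.aestronglyMeasurable ?_
  refine ae_of_all _ fun u => ?_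
  rw [Real.norm_eq_abs, abs_of_nonneg (by positivity)]
  gcongr
  nlinarith

lemma aux_mono {a b : ℝ} (ha : 0 < a) (hab : a ≤ b) :
    ∫ u, (u ^ 2 + b ^ 2)⁻¹ ∂μ ≤ ∫ u, (u ^ 2 + a ^ 2)⁻¹ ∂μ := by
  refine integral_mono (aux_int μ b (lt_of_lt_of_le ha hab)) (aux_int μ a ha) fun u => ?_
  gcongr <;> nlinarith

lemma aux_strict {a b : ℝ} (ha : 0 < a) (hab : a < b) :
    ∫ u, (u ^ 2 + b ^ 2)⁻¹ ∂μ < ∫ u, (u ^ 2 + a ^ 2)⁻¹ ∂μ := by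
  have hb : 0 < b := ha.trans hab
  have hia := aux_int μ a ha
  have hib := aux_int μ b hb
  have hpt : ∀ u : ℝ, 0 < (u ^ 2 + a ^ 2)⁻¹ - (u ^ 2 + b ^ 2)⁻¹ := by
    intro u
    rw [sub_pos]
    gcongr <;> nlinarith
  have hpos : 0 < ∫ u, ((u ^ 2 + a ^ 2)⁻¹ - (u ^ 2 + b ^ 2)⁻¹) ∂μ := by
    rw [integral_pos_iff_support_of_nonneg (fun u => (hpt u).le) (hia.sub hib)]
    have : Function.support (fun u : ℝ => (u ^ 2 + a ^ 2)⁻¹ - (u ^ 2 + b ^ 2)⁻¹) = Set.univ :=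
      Set.eq_univ_of_forall fun u => (hpt u).ne'
    rw [this]
    simp
  rw [integral_sub hia hib] at hpos
  linarith

lemma aux_cont {t : ℝ} (ht : 0 < t) :
    ContinuousAt (fun x : ℝ => ∫ u, (u ^ 2 + x ^ 2)⁻¹ ∂μ) t := by
  refine continuousAt_of_dominated (F := fun x u => (u ^ 2 + x ^ 2)⁻¹)
    (bound := fun _ => ((t / 2) ^ 2)⁻¹) ?_ ?_ (integrable_const _) ?_
  · refine Eventually.of_forall fun x => ?_
    exact Measurable.aestronglyMeasurable (by measurability)
  · filter_upwards [Metric.ball_mem_nhds t (half_pos ht)] with x hx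
    refine ae_of_all _ fun u => ?_
    have hx' : t / 2 < x := by
      rw [Metric.mem_ball, Real.dist_eq, abs_lt] at hx
      linarith
    rw [Real.norm_eq_abs, abs_of_nonneg (by positivity)]
    gcongr <;> nlinarith
  · refine ae_of_all _ fun u => ?_
    have hc : ContinuousAt (fun x : ℝ => u ^ 2 + x ^ 2) t := by fun_prop
    exact hc.inv₀ (by positivity)

end Aux

theorem sigma_epsilon0_limit
    (α β : ℝ) (hβ : 0 < β) (hαβ : β < α)
    (μ : Measure ℝ) [IsProbabilityMeasure μ] (hμ0 : μ (Set.Iio 0) = 0)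
    (hΞ : ENNReal.ofReal ((Real.log α - Real.log β) / (α - β)) <
      ∫⁻ u, ENNReal.ofReal (1 / u ^ 2) ∂μ)
    (σ : ℝ → ℝ)
    (hσ : ∀ ε : ℝ, 0 < ε → σ ε ∈ Set.Ioo 0 (Real.log (α / β)) ∧
      (1 / σ ε) *
        ∫ u, (u ^ 2 +
          ε ^ 2 * (α - β) ^ 2 * Real.exp (σ ε) / (α - β * Real.exp (σ ε)) ^ 2)⁻¹ ∂μ
        = 1 / (α - β))
    (s : ℝ) (hs : 0 < s)
    (hseq : ∫ u, (u ^ 2 + s ^ 2)⁻¹ ∂μ = (Real.log α - Real.log β) / (α - β)) :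
    Tendsto σ (nhdsWithin 0 (Set.Ioi 0)) (nhds (Real.log (α / β))) ∧
    Tendsto (fun ε => ε * (α - β) * Real.exp (σ ε / 2) / (α - β * Real.exp (σ ε)))
      (nhdsWithin 0 (Set.Ioi 0)) (nhds s) := by
  have hα : 0 < α := hβ.trans hαβ
  have hab : 0 < α - β := by linarith
  have hlog : Real.log (α / β) = Real.log α - Real.log β := Real.log_div hα.ne' hβ.ne'
  set G : ℝ → ℝ := fun t => ∫ u, (u ^ 2 + t ^ 2)⁻¹ ∂μ with hG
  set e₀ : ℝ → ℝ := fun ε => ε * (α - β) * Real.exp (σ ε / 2) / (α - β * Real.exp (σ ε))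
    with he₀
  -- basic facts for each ε > 0
  have key : ∀ ε : ℝ, 0 < ε →
      0 < α - β * Real.exp (σ ε) ∧ 0 < e₀ ε ∧ G (e₀ ε) = σ ε / (α - β) := by
    intro ε hε
    obtain ⟨⟨hσ0, hσlt⟩, heq⟩ := hσ ε hε
    have hexp : Real.exp (σ ε) < α / β := by
      have := Real.exp_lt_exp.2 hσlt
      rwa [Real.exp_log (by positivity)] at this
    have hden : 0 < α - β * Real.exp (σ ε) := by
      have : β * Real.exp (σ ε) < β * (α / β) := by
        exact mul_lt_mul_of_pos_left hexp hβ
      rw [mul_div_cancel₀ _ hβ.ne'] at this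
      linarith
    have he0pos : 0 < e₀ ε := by
      refine div_pos (by positivity) hden
    have hsq : ε ^ 2 * (α - β) ^ 2 * Real.exp (σ ε) / (α - β * Real.exp (σ ε)) ^ 2
        = (e₀ ε) ^ 2 := by
      have h2 : Real.exp (σ ε / 2) ^ 2 = Real.exp (σ ε) := by
        rw [sq, ← Real.exp_add, add_halves]
      rw [he₀]
      rw [div_pow, mul_pow, mul_pow, h2]
    rw [hsq] at heq
    refine ⟨hden, he0pos, ?_⟩
    have hσne : σ ε ≠ 0 := hσ0.ne'
    field_simp at heq ⊢
    simp only [one_div] at heq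
    linarith [heq]
  -- ε₀ > s always
  have hlower : ∀ ε : ℝ, 0 < ε → s < e₀ ε := by
    intro ε hε
    obtain ⟨hden, he0pos, hGe⟩ := key ε hε
    obtain ⟨⟨hσ0, hσlt⟩, -⟩ := hσ ε hε
    by_contra h
    push_neg at h
    have hm : G s ≤ G (e₀ ε) := aux_mono μ he0pos h
    rw [hGe, hG] at hm
    simp only at hm
    rw [hseq] at hm
    have : Real.log α - Real.log β ≤ σ ε := by
      rw [div_le_div_iff₀ hab hab] at hm
      nlinarith
    rw [hlog] at hσlt
    linarith
  -- for every δ > 0, eventually e₀ ε < s + δ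
  have hupper : ∀ δ : ℝ, 0 < δ → ∀ᶠ ε in nhdsWithin (0:ℝ) (Set.Ioi 0), e₀ ε < s + δ := by
    intro δ hδ
    have hsd : 0 < s + δ := by linarith
    have hGlt : G (s + δ) < G s := aux_strict μ hs (by linarith)
    set θ := (α - β) * G (s + δ) with hθ
    have hθlt : θ < Real.log (α / β) := by
      rw [hlog]
      have : (α - β) * G (s + δ) < (α - β) * G s := by
        exact mul_lt_mul_of_pos_left hGlt hab
      rw [hG] at this
      simp only at this
      rw [hseq, mul_div_cancel₀ _ hab.ne'] at this
      linarith [this]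
    have hc : 0 < α - β * Real.exp θ := by
      have hexp : Real.exp θ < α / β := by
        have := Real.exp_lt_exp.2 hθlt
        rwa [Real.exp_log (by positivity)] at this
      have : β * Real.exp θ < β * (α / β) := mul_lt_mul_of_pos_left hexp hβ
      rw [mul_div_cancel₀ _ hβ.ne'] at this
      linarith
    set M := Real.exp (Real.log (α / β) / 2) with hM
    have hMpos : 0 < M := Real.exp_pos _
    set εδ := (α - β * Real.exp θ) * (s + δ) / ((α - β) * M) with hεδ
    have hεδpos : 0 < εδ := by positivity
    filter_upwards [Ioo_mem_nhdsGT_of_mem (Set.left_mem_Ico.2 hεδpos)] with ε hε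
    obtain ⟨hε0, hεlt⟩ := hε
    obtain ⟨hden, he0pos, hGe⟩ := key ε hε0
    obtain ⟨⟨hσ0, hσlt⟩, -⟩ := hσ ε hε0
    by_contra h
    push_neg at h
    have hm : G (e₀ ε) ≤ G (s + δ) := aux_mono μ hsd h
    rw [hGe] at hm
    have hσθ : σ ε ≤ θ := by
      rw [div_le_iff₀ hab] at hm
      linarith [hm]
    have hexpσ : Real.exp (σ ε) ≤ Real.exp θ := Real.exp_le_exp.2 hσθ
    have hdenge : α - β * Real.exp θ ≤ α - β * Real.exp (σ ε) := by
      nlinarith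
    have hnum : Real.exp (σ ε / 2) ≤ M := by
      rw [hM]
      exact Real.exp_le_exp.2 (by linarith)
    have hbound : e₀ ε ≤ ε * (α - β) * M / (α - β * Real.exp θ) := by
      rw [he₀]
      refine div_le_div₀ (by positivity) ?_ hc hdenge
      exact mul_le_mul_of_nonneg_left hnum (by positivity)
    have hfinal : ε * (α - β) * M / (α - β * Real.exp θ) < s + δ := by
      rw [div_lt_iff₀ hc]
      have : εδ * ((α - β) * M) = (α - β * Real.exp θ) * (s + δ) := by
        rw [hεδ]
        field_simp
      nlinarith [mul_lt_mul_of_pos_right hεlt (by positivity : (0:ℝ) < (α - β) * M)]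
    linarith
  -- tendsto of e₀
  have hte : Tendsto e₀ (nhdsWithin (0:ℝ) (Set.Ioi 0)) (nhds s) := by
    rw [Metric.tendsto_nhds]
    intro δ hδ
    filter_upwards [hupper δ hδ, self_mem_nhdsWithin] with ε h1 h2
    have h3 := hlower ε h2
    rw [Real.dist_eq, abs_lt]
    constructor <;> linarith
  refine ⟨?_, hte⟩
  -- tendsto of σ
  have hcont : ContinuousAt (fun t => (α - β) * G t) s :=
    (aux_cont μ hs).const_mul (α - β)
  have h1 : Tendsto (fun ε => (α - β) * G (e₀ ε)) (nhdsWithin (0:ℝ) (Set.Ioi 0))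
      (nhds ((α - β) * G s)) := (hcont.tendsto).comp hte
  have h2 : (α - β) * G s = Real.log (α / β) := by
    rw [hG]
    simp only
    rw [hseq, mul_div_cancel₀ _ hab.ne', hlog]
  rw [h2] at h1
  refine h1.congr' ?_
  filter_upwards [self_mem_nhdsWithin] with ε hε
  obtain ⟨-, -, hGe⟩ := key ε hε
  rw [hGe, mul_div_cancel₀ _ hab.ne']
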